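/- If a function g : ℝ≥0^m → ℝ≥0 has all finite differences nonnegative (i.e. g is absolutely monotonic in the multivariate sense), then g extends to a function given by a power series g(x₁,…,x_m) = ∑_{(p₁,…,p_m)∈ℤ≥0^m} a_{p₁,…,p_m} x₁^{p₁}⋯x_m^{p_m} with all a_{p₁,…,p_m} ≥ 0, convergent on ℝ≥0^m. -/

import Mathlib

/-- The forward finite difference of `g` in the `i`-th coordinate with step `h`. -/
def finDiff {m : ℕ} (i : Fin m) (h : ℝ) (g : (Fin m → ℝ) → ℝ) : (Fin m → ℝ) → ℝ :=
  fun x => g (x + h • (Pi.single i 1 : Fin m → ℝ)) - g x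

/-- Iterated mixed finite differences along a list of (direction, step) pairs. -/
def iterFinDiff {m : ℕ} : List (Fin m × ℝ) → ((Fin m → ℝ) → ℝ) → ((Fin m → ℝ) → ℝ)
  | [], g => g
  | (i, h) :: l, g => iterFinDiff l (finDiff i h g)

namespace AM
variable {m : ℕ}




lemma iterFinDiff_cons (i : Fin m) (h : ℝ) (l : List (Fin m × ℝ)) (f : (Fin m → ℝ) → ℝ) :
    iterFinDiff ((i, h) :: l) f = iterFinDiff l (finDiff i h f) := rfl

lemma iterFinDiff_append (l l' : List (Fin m × ℝ)) (f : (Fin m → ℝ) → ℝ) :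
    iterFinDiff (l ++ l') f = iterFinDiff l' (iterFinDiff l f) := by
  induction l generalizing f with
  | nil => rfl
  | cons a l ih => obtain ⟨i, h⟩ := a; simp [iterFinDiff, ih]

lemma finDiff_comm (i j : Fin m) (h t : ℝ) (f : (Fin m → ℝ) → ℝ) :
    finDiff i h (finDiff j t f) = finDiff j t (finDiff i h f) := by
  funext x
  simp only [finDiff]
  rw [add_right_comm]
  ring

lemma iterFinDiff_finDiff (l : List (Fin m × ℝ)) (i : Fin m) (h : ℝ) (f : (Fin m → ℝ) → ℝ) :
    iterFinDiff l (finDiff i h f) = finDiff i h (iterFinDiff l f) := by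
  induction l generalizing f with
  | nil => rfl
  | cons a l ih =>
      obtain ⟨j, t⟩ := a
      rw [iterFinDiff_cons, iterFinDiff_cons, finDiff_comm, ih]

lemma iterFinDiff_perm {l l' : List (Fin m × ℝ)} (hp : l.Perm l') (f : (Fin m → ℝ) → ℝ) :
    iterFinDiff l f = iterFinDiff l' f := by
  induction hp generalizing f with
  | nil => rfl
  | cons a _ ih => obtain ⟨i, h⟩ := a; rw [iterFinDiff_cons, iterFinDiff_cons, ih]
  | swap a b _ =>
      obtain ⟨i, h⟩ := a; obtain ⟨j, t⟩ := b
      rw [iterFinDiff_cons, iterFinDiff_cons, iterFinDiff_cons, iterFinDiff_cons, finDiff_comm]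
  | trans _ _ ih1 ih2 => rw [ih1, ih2]

lemma finDiff_add (i : Fin m) (h : ℝ) (f₁ f₂ : (Fin m → ℝ) → ℝ) :
    finDiff i h (fun x => f₁ x + f₂ x) = fun x => finDiff i h f₁ x + finDiff i h f₂ x := by
  funext x; simp [finDiff]; ring

lemma iterFinDiff_add (l : List (Fin m × ℝ)) (f₁ f₂ : (Fin m → ℝ) → ℝ) :
    iterFinDiff l (fun x => f₁ x + f₂ x) = fun x => iterFinDiff l f₁ x + iterFinDiff l f₂ x := by
  induction l generalizing f₁ f₂ with
  | nil => rfl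
  | cons a l ih => obtain ⟨i, h⟩ := a; rw [iterFinDiff_cons, finDiff_add, ih]; rfl

lemma finDiff_shift (i : Fin m) (h : ℝ) (v : Fin m → ℝ) (f : (Fin m → ℝ) → ℝ) :
    finDiff i h (fun y => f (y + v)) = fun y => finDiff i h f (y + v) := by
  funext y; simp only [finDiff]; rw [add_right_comm]

lemma iterFinDiff_shift (l : List (Fin m × ℝ)) (v : Fin m → ℝ) (f : (Fin m → ℝ) → ℝ) :
    iterFinDiff l (fun y => f (y + v)) = fun y => iterFinDiff l f (y + v) := by
  induction l generalizing f with
  | nil => rfl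
  | cons a l ih => obtain ⟨i, h⟩ := a; rw [iterFinDiff_cons, finDiff_shift, ih]; rfl


def dirList (p : Fin m → ℕ) : List (Fin m) :=
  (List.finRange m).flatMap fun i => List.replicate (p i) i

def diffList (p : Fin m → ℕ) (h : ℝ) : List (Fin m × ℝ) :=
  (dirList p).map fun i => (i, h)

lemma dirList_length (p : Fin m → ℕ) : (dirList p).length = ∑ i, p i := by
  rw [Fin.sum_univ_def]
  simp [dirList, List.length_flatMap, Function.comp_def]

lemma dirList_perm (p : Fin m → ℕ) (i : Fin m) :
    (dirList (p + Pi.single i 1)).Perm (i :: dirList p) := by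
  obtain ⟨s, t, hst⟩ := List.append_of_mem (List.mem_finRange i)
  have hnd : (List.finRange m).Nodup := List.nodup_finRange m
  rw [hst] at hnd
  have his : i ∉ s := by
    intro hmem
    exact (List.disjoint_of_nodup_append hnd) hmem (List.mem_cons_self (a := i) (l := t))
  have hit : i ∉ t := by
    have := (List.nodup_append.mp hnd).2.1
    exact (List.nodup_cons.mp this).1
  have hbind : ∀ (u : List (Fin m)), i ∉ u →
      (u.flatMap fun j => List.replicate ((p + Pi.single i 1 : Fin m → ℕ) j) j) =
      (u.flatMap fun j => List.replicate (p j) j) := by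
    intro u hu
    induction u with
    | nil => rfl
    | cons a u ih =>
        have hai : a ≠ i := fun hh => hu (hh ▸ List.mem_cons_self (a := a) (l := u))
        simp only [List.flatMap_cons]
        rw [ih (fun hh => hu (List.mem_cons_of_mem a hh))]
        congr 1
        congr 1
        simp [Pi.single_apply, hai]
  unfold dirList
  rw [hst]
  simp only [List.flatMap_append, List.flatMap_cons]
  rw [hbind s his, hbind t hit]
  have hrep : ((p + Pi.single i 1 : Fin m → ℕ) i) = p i + 1 := by simp
  rw [hrep, List.replicate_succ]
  have := List.perm_middle (a := i) (l₁ := s.flatMap fun j => List.replicate (p j) j)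
    (l₂ := List.replicate (p i) i ++ t.flatMap fun j => List.replicate (p j) j)
  refine List.Perm.trans ?_ this
  simp [List.append_assoc]

lemma diffList_single_perm (p : Fin m → ℕ) (i : Fin m) (h : ℝ) :
    (diffList (p + Pi.single i 1) h).Perm ((i, h) :: diffList p h) :=
  (dirList_perm p i).map _

lemma iterFinDiff_diffList_finDiff (p : Fin m → ℕ) (i : Fin m) (h : ℝ) (f : (Fin m → ℝ) → ℝ) :
    iterFinDiff (diffList p h) (finDiff i h f) =
      iterFinDiff (diffList (p + Pi.single i 1) h) f := by
  rw [iterFinDiff_perm (diffList_single_perm p i h), iterFinDiff_cons]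

lemma newton (h : ℝ) :
    ∀ (N : ℕ) (q : Fin m → ℕ), (∑ i, q i) ≤ N → ∀ (f : (Fin m → ℝ) → ℝ) (x : Fin m → ℝ),
    f (x + fun j => (q j : ℝ) * h) =
      ∑ p ∈ Finset.Iic q, ((∏ i, (q i).choose (p i) : ℕ) : ℝ) * iterFinDiff (diffList p h) f x := by
  intro N
  induction N with
  | zero =>
      intro q hq f x
      have hq0 : q = 0 := by
        funext j
        exact Finset.sum_eq_zero_iff.mp (Nat.le_zero.mp hq) j (Finset.mem_univ j)
      subst hq0
      have h1 : Finset.Iic (0 : Fin m → ℕ) = {0} := by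
        ext p; simp [Finset.mem_Iic, Pi.le_def, funext_iff]
      rw [h1, Finset.sum_singleton]
      have hdl : diffList (0 : Fin m → ℕ) h = [] := by simp [diffList, dirList]
      have hx : (x + fun _ : Fin m => ((0:ℕ):ℝ) * h) = x := by funext j; simp
      simp only [Pi.zero_apply] at hx ⊢
      rw [hx, hdl]
      simp [iterFinDiff]
  | succ N ih =>
      intro q hq f x
      rcases Nat.lt_or_ge (∑ i, q i) (N + 1) with hlt | hge
      · exact ih q (Nat.lt_succ_iff.mp hlt) f x
      have hpos : 0 < ∑ i, q i := by omega
      obtain ⟨i, -, hqi⟩ := Finset.exists_ne_zero_of_sum_ne_zero (by omega :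
        (∑ i, q i) ≠ 0)
      have hqi1 : 1 ≤ q i := Nat.one_le_iff_ne_zero.mpr hqi
      set q' : Fin m → ℕ := Function.update q i (q i - 1) with hq'def
      have hq'i : q' i = q i - 1 := by simp [hq'def]
      have hq'j : ∀ j, j ≠ i → q' j = q j := by
        intro j hj; simp [hq'def, Function.update_apply, hj]
      have hq'le : ∀ j, q' j ≤ q j := by
        intro j; by_cases hj : j = i
        · subst hj; omega
        · rw [hq'j j hj]
      have hsum' : (∑ j, q' j) ≤ N := by
        have h2 : ∑ j, q j = q i + ∑ j ∈ Finset.univ.erase i, q j :=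
          (Finset.add_sum_erase _ _ (Finset.mem_univ i)).symm
        have h1 : ∑ j, q' j = q' i + ∑ j ∈ Finset.univ.erase i, q' j :=
          (Finset.add_sum_erase _ _ (Finset.mem_univ i)).symm
        have h3 : ∑ j ∈ Finset.univ.erase i, q' j = ∑ j ∈ Finset.univ.erase i, q j :=
          Finset.sum_congr rfl (fun j hj => hq'j j (Finset.mem_erase.mp hj).1)
        omega
      have hvec : (x + fun j => (q j : ℝ) * h) =
          (x + fun j => (q' j : ℝ) * h) + h • (Pi.single i 1 : Fin m → ℝ) := by
        funext j
        by_cases hj : j = i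
        · subst hj
          simp only [Pi.add_apply, Pi.smul_apply, Pi.single_eq_same, smul_eq_mul, mul_one,
            hq'i, Nat.cast_sub hqi1]
          ring
        · simp [hq'j j hj, Pi.single_eq_of_ne hj]
      have hstep : f (x + fun j => (q j : ℝ) * h) =
          f (x + fun j => (q' j : ℝ) * h) + finDiff i h f (x + fun j => (q' j : ℝ) * h) := by
        rw [hvec]; simp [finDiff]
      rw [hstep, ih q' hsum' f x, ih q' hsum' (finDiff i h f) x]
      have hshift : ∀ p : Fin m → ℕ,
          iterFinDiff (diffList p h) (finDiff i h f) x =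
          iterFinDiff (diffList (p + Pi.single i 1) h) f x := by
        intro p; rw [iterFinDiff_diffList_finDiff]
      simp only [hshift]
      set D : (Fin m → ℕ) → ℝ := fun p => iterFinDiff (diffList p h) f x with hD
      set R : (Fin m → ℕ) → ℕ := fun p => ∏ j ∈ Finset.univ.erase i, (q j).choose (p j) with hR
      have hWsplit : ∀ p : Fin m → ℕ, (∏ j, (q j).choose (p j)) = (q i).choose (p i) * R p := by
        intro p
        rw [hR, ← Finset.mul_prod_erase _ _ (Finset.mem_univ i)]
      have hW'split : ∀ p : Fin m → ℕ, (∏ j, (q' j).choose (p j)) = (q' i).choose (p i) * R p := by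
        intro p
        rw [hR, ← Finset.mul_prod_erase _ _ (Finset.mem_univ i)]
        congr 1
        exact Finset.prod_congr rfl (fun j hj => by rw [hq'j j (Finset.mem_erase.mp hj).1])
      have hsub : Finset.Iic q' ⊆ Finset.Iic q := by
        intro p hp
        simp only [Finset.mem_Iic, Pi.le_def] at hp ⊢
        exact fun j => le_trans (hp j) (hq'le j)
      have hfirst : ∑ p ∈ Finset.Iic q', ((∏ j, (q' j).choose (p j) : ℕ) : ℝ) * D p =
          ∑ p ∈ Finset.Iic q, ((∏ j, (q' j).choose (p j) : ℕ) : ℝ) * D p := by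
        refine Finset.sum_subset hsub ?_
        intro p hp hnp
        have hplt : q' i < p i := by
          by_contra hle
          push_neg at hle
          refine hnp ?_
          simp only [Finset.mem_Iic, Pi.le_def] at hp ⊢
          intro j
          by_cases hj : j = i
          · subst hj; exact hle
          · rw [hq'j j hj]; exact hp j
        rw [hW'split p, Nat.choose_eq_zero_of_lt hplt]
        simp
      have hsecond : ∑ p ∈ Finset.Iic q', ((∏ j, (q' j).choose (p j) : ℕ) : ℝ) * D (p + Pi.single i 1) =
          ∑ p ∈ (Finset.Iic q).filter (fun p => p i ≠ 0),
            (((q' i).choose (p i - 1) * R p : ℕ) : ℝ) * D p := by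
        refine Finset.sum_bij' (fun p _ => p + Pi.single i 1) (fun p _ => p - Pi.single i 1)
          ?_ ?_ ?_ ?_ ?_
        · intro p hp
          simp only [Finset.mem_Iic, Pi.le_def] at hp
          simp only [Finset.mem_filter, Finset.mem_Iic, Pi.le_def]
          constructor
          · intro j
            by_cases hj : j = i
            · subst hj
              have h1 := hp j
              simp only [Pi.add_apply, Pi.single_eq_same]
              omega
            · simp only [Pi.add_apply, Pi.single_eq_of_ne hj, add_zero]
              exact le_trans (hp j) (hq'le j)
          · simp [Pi.single_eq_same]
        · intro p hp
          simp only [Finset.mem_filter, Finset.mem_Iic, Pi.le_def] at hp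
          obtain ⟨hple, hpi⟩ := hp
          simp only [Finset.mem_Iic, Pi.le_def]
          intro j
          by_cases hj : j = i
          · subst hj
            have := hple j
            simp only [Pi.sub_apply, Pi.single_eq_same]
            omega
          · simp only [Pi.sub_apply, Pi.single_eq_of_ne hj, Nat.sub_zero]
            rw [hq'j j hj]
            exact hple j
        · intro p hp
          funext j
          by_cases hj : j = i
          · subst hj; simp [Pi.single_eq_same]
          · simp [Pi.single_eq_of_ne hj]
        · intro p hp
          simp only [Finset.mem_filter] at hp
          funext j
          by_cases hj : j = i
          · subst hj
            have := hp.2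
            simp only [Pi.add_apply, Pi.sub_apply, Pi.single_eq_same]
            omega
          · simp [Pi.single_eq_of_ne hj]
        · intro p hp
          have h1 : (p + Pi.single i 1 : Fin m → ℕ) i - 1 = p i := by
            simp [Pi.single_eq_same]
          have h2 : R (p + Pi.single i 1) = R p := by
            rw [hR]
            refine Finset.prod_congr rfl (fun j hj => ?_)
            have hj' := (Finset.mem_erase.mp hj).1
            simp [Pi.single_eq_of_ne hj']
          rw [h1, h2, hW'split p]
      rw [hfirst, hsecond, Finset.sum_filter, ← Finset.sum_add_distrib]
      refine Finset.sum_congr rfl (fun p hp => ?_)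
      rw [hWsplit p, hW'split p]
      by_cases hpi : p i = 0
      · rw [if_neg (by simp [hpi]), hpi]
        simp [hD]
      · rw [if_pos hpi]
        obtain ⟨k, hk⟩ := Nat.exists_eq_succ_of_ne_zero hpi
        obtain ⟨n, hn⟩ := Nat.exists_eq_succ_of_ne_zero (by omega : q i ≠ 0)
        have hq'in : q' i = n := by omega
        rw [hk, hq'in, hn]
        rw [Nat.succ_sub_one, Nat.choose_succ_succ]
        push_cast
        ring

section WithG
variable {g : (Fin m → ℝ) → ℝ}
variable (hdiff : ∀ l : List (Fin m × ℝ), (∀ q ∈ l, 0 < q.2) →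
      ∀ x : Fin m → ℝ, (∀ i, 0 ≤ x i) → 0 ≤ iterFinDiff l g x)

lemma eval_shift (x y : Fin m → ℝ) (s : Finset (Fin m)) (j : Fin m) :
    (x + ∑ i ∈ s, (y i - x i) • (Pi.single i 1 : Fin m → ℝ)) j = if j ∈ s then y j else x j := by
  simp only [Pi.add_apply, Finset.sum_apply, Pi.smul_apply, Pi.single_apply, smul_eq_mul,
    mul_ite, mul_one, mul_zero]
  rw [Finset.sum_ite_eq s j (fun i => y i - x i)]
  split_ifs <;> ring

include hdiff

lemma mono_single (l : List (Fin m × ℝ)) (hl : ∀ q ∈ l, 0 < q.2) (j : Fin m) {t : ℝ}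
    (ht : 0 ≤ t) {x : Fin m → ℝ} (hx : ∀ i, 0 ≤ x i) :
    iterFinDiff l g x ≤ iterFinDiff l g (x + t • (Pi.single j 1 : Fin m → ℝ)) := by
  rcases eq_or_lt_of_le ht with hteq | htpos
  · have : x + t • (Pi.single j 1 : Fin m → ℝ) = x := by rw [← hteq]; simp
    rw [this]
  · have hl' : ∀ q ∈ l ++ [(j, t)], 0 < q.2 := by
      intro q hq
      rcases List.mem_append.mp hq with h1 | h1
      · exact hl q h1
      · simp at h1; subst h1; exact htpos
    have := hdiff (l ++ [(j, t)]) hl' x hx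
    rw [iterFinDiff_append] at this
    have heq : iterFinDiff [(j, t)] (iterFinDiff l g) = finDiff j t (iterFinDiff l g) := rfl
    rw [heq] at this
    unfold finDiff at this
    linarith

lemma mono_le (l : List (Fin m × ℝ)) (hl : ∀ q ∈ l, 0 < q.2) {x y : Fin m → ℝ}
    (hx : ∀ i, 0 ≤ x i) (hxy : ∀ i, x i ≤ y i) :
    iterFinDiff l g x ≤ iterFinDiff l g y := by
  have key : ∀ s : Finset (Fin m),
      iterFinDiff l g x ≤ iterFinDiff l g (x + ∑ i ∈ s, (y i - x i) • (Pi.single i 1 : Fin m → ℝ)) := by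
    intro s
    induction s using Finset.induction with
    | empty => simp
    | @insert a s ha iha =>
        have hsplit : x + ∑ i ∈ insert a s, (y i - x i) • (Pi.single i 1 : Fin m → ℝ) =
            (x + ∑ i ∈ s, (y i - x i) • (Pi.single i 1 : Fin m → ℝ)) + (y a - x a) • (Pi.single a 1 : Fin m → ℝ) := by
          rw [Finset.sum_insert ha]; module
        rw [hsplit]
        refine le_trans iha (mono_single hdiff l hl a (by linarith [hxy a]) ?_)
        intro j
        rw [eval_shift]
        split_ifs
        · exact le_trans (hx j) (hxy j)
        · exact hx j
  have hy : y = x + ∑ i ∈ Finset.univ, (y i - x i) • (Pi.single i 1 : Fin m → ℝ) := by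
    funext j
    rw [eval_shift]
    simp
  rw [hy]
  exact key Finset.univ

lemma doubling (h : ℝ) (hh : 0 < h) :
    ∀ (L : List (Fin m)) (M : List (Fin m × ℝ)), (∀ q ∈ M, 0 < q.2) →
    ∀ (x : Fin m → ℝ), (∀ i, 0 ≤ x i) →
    (2 : ℝ) ^ L.length * iterFinDiff (L.map fun i => (i, h)) (iterFinDiff M g) x ≤
      iterFinDiff (L.map fun i => (i, 2 * h)) (iterFinDiff M g) x := by
  intro L
  induction L with
  | nil => intro M hM x hx; simp [iterFinDiff]
  | cons i L ih =>
      intro M hM x hx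
      have hFdef : finDiff i h (iterFinDiff M g) = iterFinDiff (M ++ [(i, h)]) g := by
        rw [iterFinDiff_append]; rfl
      have hM' : ∀ q ∈ M ++ [(i, h)], 0 < q.2 := by
        intro q hq
        rcases List.mem_append.mp hq with h1 | h1
        · exact hM q h1
        · simp at h1; subst h1; exact hh
      -- split the 2h difference
      have hsplit : finDiff i (2 * h) (iterFinDiff M g) =
          fun z => finDiff i h (iterFinDiff M g) z +
            finDiff i h (iterFinDiff M g) (z + h • (Pi.single i 1 : Fin m → ℝ)) := by
        funext z
        simp only [finDiff]
        have : z + (2 * h) • (Pi.single i 1 : Fin m → ℝ) =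
            z + h • (Pi.single i 1 : Fin m → ℝ) + h • (Pi.single i 1 : Fin m → ℝ) := by
          module
        rw [this]
        ring
      have hLHS : iterFinDiff ((i, 2*h) :: L.map fun j => (j, 2*h)) (iterFinDiff M g) x =
          iterFinDiff (L.map fun j => (j, 2*h)) (iterFinDiff (M ++ [(i,h)]) g) x +
          iterFinDiff (L.map fun j => (j, 2*h)) (iterFinDiff (M ++ [(i,h)]) g)
            (x + h • (Pi.single i 1 : Fin m → ℝ)) := by
        rw [iterFinDiff_cons, hsplit, ← hFdef]
        rw [iterFinDiff_add]
        have hsh := iterFinDiff_shift (L.map fun j => (j, 2*h)) (h • (Pi.single i 1 : Fin m → ℝ))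
          (finDiff i h (iterFinDiff M g))
        rw [hFdef]
        rw [hFdef] at hsh
        simp only [hsh]
      have hsingle : ∀ j, (0:ℝ) ≤ (Pi.single i 1 : Fin m → ℝ) j := by
        intro j
        rw [Pi.single_apply]
        split_ifs <;> norm_num
      have hx' : ∀ j, 0 ≤ (x + h • (Pi.single i 1 : Fin m → ℝ)) j := by
        intro j
        simp only [Pi.add_apply, Pi.smul_apply, smul_eq_mul]
        have := mul_nonneg hh.le (hsingle j)
        linarith [hx j]
      have hxle : ∀ j, x j ≤ (x + h • (Pi.single i 1 : Fin m → ℝ)) j := by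
        intro j
        simp only [Pi.add_apply, Pi.smul_apply, smul_eq_mul]
        have := mul_nonneg hh.le (hsingle j)
        linarith
      have ih1 := ih (M ++ [(i,h)]) hM' x hx
      have ih2 := ih (M ++ [(i,h)]) hM' (x + h • (Pi.single i 1 : Fin m → ℝ)) hx'
      have hmono : iterFinDiff (L.map fun j => (j, h)) (iterFinDiff (M ++ [(i,h)]) g) x ≤
          iterFinDiff (L.map fun j => (j, h)) (iterFinDiff (M ++ [(i,h)]) g)
            (x + h • (Pi.single i 1 : Fin m → ℝ)) := by
        rw [← iterFinDiff_append]
        refine mono_le hdiff _ ?_ hx hxle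
        intro q hq
        rcases List.mem_append.mp hq with h1 | h1
        · exact hM' q h1
        · obtain ⟨j, -, rfl⟩ := List.mem_map.mp h1
          exact hh
      simp only [List.map_cons, List.length_cons]
      rw [hLHS]
      have hcons : iterFinDiff ((i, h) :: L.map fun j => (j, h)) (iterFinDiff M g) x =
          iterFinDiff (L.map fun j => (j, h)) (iterFinDiff (M ++ [(i,h)]) g) x := by
        rw [iterFinDiff_cons, hFdef]
      rw [hcons]
      have hpow : (0:ℝ) < 2 ^ L.length := by positivity
      rw [pow_succ]
      nlinarith [le_trans ih2 (le_refl _), hmono, ih1,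
        mul_le_mul_of_nonneg_left hmono (le_of_lt hpow)]


-- ℕ binomial estimates
omit hdiff in
lemma choose_doubling {Q q : ℕ} (hQ : 2 * q ≤ Q) (p : ℕ) :
    2 ^ p * q.choose p ≤ Q.choose p := by
  have key : 2 ^ p * q.descFactorial p ≤ Q.descFactorial p := by
    have h2p : (2:ℕ) ^ p = ∏ _i ∈ Finset.range p, 2 := by simp
    rw [Nat.descFactorial_eq_prod_range, Nat.descFactorial_eq_prod_range, h2p,
      ← Finset.prod_mul_distrib]
    refine Finset.prod_le_prod' ?_
    intro j hj
    omega
  have h1 : Nat.factorial p * (2 ^ p * q.choose p) = 2 ^ p * q.descFactorial p := by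
    rw [Nat.descFactorial_eq_factorial_mul_choose]; ring
  have h2 : Nat.factorial p * Q.choose p = Q.descFactorial p := by
    rw [Nat.descFactorial_eq_factorial_mul_choose]
  have := h1 ▸ key
  rw [← h2] at this
  exact Nat.le_of_mul_le_mul_left this (Nat.factorial_pos p)

omit hdiff in
lemma pow_sub_le_choose_mul_factorial (q p : ℕ) : (q - p) ^ p ≤ q.choose p * Nat.factorial p := by
  calc (q - p) ^ p ≤ (q + 1 - p) ^ p := Nat.pow_le_pow_left (by omega) p
  _ ≤ q.descFactorial p := Nat.pow_sub_le_descFactorial q p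
  _ = q.choose p * Nat.factorial p := by rw [Nat.descFactorial_eq_factorial_mul_choose]; ring

omit hdiff in
lemma choose_mul_factorial_le_pow (q p : ℕ) : q.choose p * Nat.factorial p ≤ q ^ p := by
  rw [mul_comm, ← Nat.descFactorial_eq_factorial_mul_choose]
  exact Nat.descFactorial_le_pow q p

-- step sizes
omit hdiff in
lemma hstep_pos (n : ℕ) : (0:ℝ) < (1/2) ^ n := by positivity

-- nonnegativity of multi-index differences of g
lemma Dp_nonneg (p : Fin m → ℕ) {h : ℝ} (hh : 0 < h) {x : Fin m → ℝ} (hx : ∀ i, 0 ≤ x i) :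
    0 ≤ iterFinDiff (diffList p h) g x := by
  refine hdiff _ ?_ x hx
  intro q hq
  obtain ⟨j, -, rfl⟩ := List.mem_map.mp hq
  exact hh

lemma Dp_doubling (p : Fin m → ℕ) {h : ℝ} (hh : 0 < h) :
    (2:ℝ) ^ (∑ i, p i) * iterFinDiff (diffList p h) g 0 ≤
      iterFinDiff (diffList p (2 * h)) g 0 := by
  have := doubling hdiff h hh (dirList p) [] (by simp) 0 (by intro i; simp)
  simpa [dirList_length, diffList, iterFinDiff] using this

-- the normalized coefficient sequence
omit hdiff in
lemma cs_well (p : Fin m → ℕ) (n : ℕ) :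
    (0:ℝ) < ((1/2:ℝ)^n) ^ (∑ i, p i) * ∏ i, (Nat.factorial (p i) : ℝ) := by
  have : ∀ i ∈ Finset.univ, (0:ℝ) < (Nat.factorial (p i) : ℝ) := by
    intro i _; exact_mod_cast Nat.factorial_pos (p i)
  have h2 := Finset.prod_pos this
  positivity

lemma cs_antitone_step (p : Fin m → ℕ) (n : ℕ) :
    iterFinDiff (diffList p ((1/2:ℝ)^(n+1))) g 0 / (((1/2:ℝ)^(n+1)) ^ (∑ i, p i) * ∏ i, (Nat.factorial (p i) : ℝ)) ≤
    iterFinDiff (diffList p ((1/2:ℝ)^n)) g 0 / (((1/2:ℝ)^n) ^ (∑ i, p i) * ∏ i, (Nat.factorial (p i) : ℝ)) := by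
  have hh : (0:ℝ) < (1/2:ℝ)^(n+1) := hstep_pos (n+1)
  have hdb := Dp_doubling hdiff p hh
  have h2h : 2 * (1/2:ℝ)^(n+1) = (1/2:ℝ)^n := by ring
  rw [h2h] at hdb
  rw [div_le_div_iff₀ (cs_well p (n+1)) (cs_well p n)]
  have hK : (0:ℝ) < ∏ i, (Nat.factorial (p i) : ℝ) := by
    refine Finset.prod_pos ?_
    intro i _; exact_mod_cast Nat.factorial_pos (p i)
  have hsn : (0:ℝ) < ((1/2:ℝ)^n) ^ (∑ i, p i) := by positivity
  have hsn1 : (0:ℝ) < ((1/2:ℝ)^(n+1)) ^ (∑ i, p i) := by positivity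
  have hrel : ((1/2:ℝ)^n) ^ (∑ i, p i) = 2 ^ (∑ i, p i) * ((1/2:ℝ)^(n+1)) ^ (∑ i, p i) := by
    rw [← mul_pow, ← h2h]
  rw [hrel]
  have hD1 : 0 ≤ iterFinDiff (diffList p ((1/2:ℝ)^(n+1))) g 0 :=
    Dp_nonneg hdiff p hh (by intro i; simp)
  nlinarith [mul_le_mul_of_nonneg_right hdb (le_of_lt (mul_pos hsn1 hK))]

-- telescoping along the diagonal
omit hdiff in
lemma diag_telescope (f : (Fin m → ℝ) → ℝ) (t : ℝ) (y : Fin m → ℝ) :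
    f (y + t • (fun _ => (1:ℝ))) - f y =
      ∑ k ∈ Finset.range m, if hk : k < m then
        finDiff ⟨k, hk⟩ t f (y + t • (fun j : Fin m => if (j:ℕ) < k then (1:ℝ) else 0)) else 0 := by
  have key : ∀ k : ℕ, k ≤ m →
      f (y + t • (fun j : Fin m => if (j:ℕ) < k then (1:ℝ) else 0)) - f y =
      ∑ l ∈ Finset.range k, if hl : l < m then
        finDiff ⟨l, hl⟩ t f (y + t • (fun j : Fin m => if (j:ℕ) < l then (1:ℝ) else 0)) else 0 := by
    intro k
    induction k with
    | zero =>
        intro _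
        have h0 : (fun j : Fin m => if ((j:ℕ) < 0) then (1:ℝ) else 0) = (fun _ => (0:ℝ)) := by
          funext j; simp
        have h1 : y + t • (fun _ : Fin m => (0:ℝ)) = y := by
          funext j; simp
        rw [h0, h1, sub_self, Finset.range_zero, Finset.sum_empty]
    | succ k ih =>
        intro hk1
        have hkm : k < m := hk1
        rw [Finset.sum_range_succ, ← ih (le_of_lt hkm), dif_pos hkm]
        have harg : y + t • (fun j : Fin m => if (j:ℕ) < k + 1 then (1:ℝ) else 0) =
            (y + t • (fun j : Fin m => if (j:ℕ) < k then (1:ℝ) else 0)) +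
              t • (Pi.single (⟨k, hkm⟩ : Fin m) 1 : Fin m → ℝ) := by
          funext j
          simp only [Pi.add_apply, Pi.smul_apply, smul_eq_mul, Pi.single_apply]
          rcases Nat.lt_or_ge (j:ℕ) k with h1 | h1
          · rw [if_pos (by omega), if_pos h1, if_neg (by rw [Fin.ext_iff]; simp; omega)]
            ring
          · rcases eq_or_lt_of_le h1 with h2 | h2
            · rw [if_pos (by omega), if_neg (by omega), if_pos (by rw [Fin.ext_iff]; simp; omega)]
              ring
            · rw [if_neg (by omega), if_neg (by omega), if_neg (by rw [Fin.ext_iff]; simp; omega)]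
              ring
        rw [harg]
        simp only [finDiff]
        ring
  have hm := key m (le_refl m)
  have harg : (fun j : Fin m => if (j:ℕ) < m then (1:ℝ) else 0) = (fun _ : Fin m => (1:ℝ)) := by
    funext j; rw [if_pos j.isLt]
  rw [← harg]
  exact hm

lemma diag_convex {x : Fin m → ℝ} (hx : ∀ i, 0 ≤ x i) {t : ℝ} (ht : 0 < t) :
    2 * g (x + t • (fun _ => (1:ℝ))) ≤ g x + g (x + (2*t) • (fun _ => (1:ℝ))) := by
  set G : (Fin m → ℝ) → ℝ := fun y => g (y + t • (fun _ => (1:ℝ))) - g y with hG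
  have hkey : 0 ≤ G (x + t • (fun _ => (1:ℝ))) - G x := by
    rw [diag_telescope G t x]
    refine Finset.sum_nonneg ?_
    intro k hk
    rcases Nat.lt_or_ge k m with hkm | hkm
    swap
    · rw [dif_neg (by omega)]
    rw [dif_pos hkm]
    set z := x + t • (fun j : Fin m => if (j:ℕ) < k then (1:ℝ) else 0) with hz
    have hz0 : ∀ j, 0 ≤ z j := by
      intro j
      simp only [hz, Pi.add_apply, Pi.smul_apply, smul_eq_mul]
      have : (0:ℝ) ≤ (if (j:ℕ) < k then (1:ℝ) else 0) := by split_ifs <;> norm_num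
      nlinarith [hx j, ht.le]
    -- finDiff k t G z = ∑_j iterFinDiff [(k,t),(j,t)] g (z + t u_j)
    have hGd : finDiff ⟨k, hkm⟩ t G z =
        finDiff ⟨k, hkm⟩ t g (z + t • (fun _ => (1:ℝ))) - finDiff ⟨k, hkm⟩ t g z := by
      simp only [finDiff, hG]
      have : z + t • (Pi.single (⟨k,hkm⟩ : Fin m) 1 : Fin m → ℝ) + t • (fun _ : Fin m => (1:ℝ)) =
          z + t • (fun _ : Fin m => (1:ℝ)) + t • (Pi.single (⟨k,hkm⟩ : Fin m) 1 : Fin m → ℝ) := by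
        module
      rw [this]
      ring
    rw [hGd]
    have htel := diag_telescope (finDiff ⟨k, hkm⟩ t g) t z
    rw [htel]
    refine Finset.sum_nonneg ?_
    intro l hl
    rcases Nat.lt_or_ge l m with hlm | hlm
    swap
    · rw [dif_neg (by omega)]
    rw [dif_pos hlm]
    have : finDiff (⟨l, hlm⟩ : Fin m) t (finDiff (⟨k, hkm⟩ : Fin m) t g) =
        iterFinDiff [((⟨k,hkm⟩ : Fin m), t), ((⟨l,hlm⟩ : Fin m), t)] g := rfl
    rw [this]
    refine hdiff _ ?_ _ ?_
    · intro q hq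
      simp only [List.mem_cons, List.mem_singleton, List.not_mem_nil, or_false] at hq
      rcases hq with h1 | h1 <;> (subst h1; exact ht)
    · intro j
      simp only [Pi.add_apply, Pi.smul_apply, smul_eq_mul]
      have : (0:ℝ) ≤ (if (j:ℕ) < l then (1:ℝ) else 0) := by split_ifs <;> norm_num
      nlinarith [hz0 j, ht.le]
  have h2t : x + t • (fun _ : Fin m => (1:ℝ)) + t • (fun _ : Fin m => (1:ℝ)) =
      x + (2*t) • (fun _ : Fin m => (1:ℝ)) := by module
  simp only [hG] at hkey
  rw [h2t] at hkey
  linarith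


lemma g_mono {x y : Fin m → ℝ} (hx : ∀ i, 0 ≤ x i) (hxy : ∀ i, x i ≤ y i) : g x ≤ g y := by
  have := mono_le hdiff [] (by simp) hx hxy
  simpa [iterFinDiff] using this

lemma diag_rc {x : Fin m → ℝ} (hx : ∀ i, 0 ≤ x i) :
    Filter.Tendsto (fun n : ℕ => g (x + ((1/2:ℝ)^n) • (fun _ => (1:ℝ)))) Filter.atTop
      (nhds (g x)) := by
  set φ : ℕ → ℝ := fun n => g (x + ((1/2:ℝ)^n) • (fun _ => (1:ℝ))) with hφ
  have hlow : ∀ n, g x ≤ φ n := by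
    intro n
    refine g_mono hdiff hx ?_
    intro i
    simp only [Pi.add_apply, Pi.smul_apply, smul_eq_mul, mul_one]
    have := hstep_pos n
    linarith
  have hrec : ∀ n, φ (n+1) - g x ≤ (φ n - g x) / 2 := by
    intro n
    have hcv := diag_convex hdiff hx (hstep_pos (n+1))
    have h2t : 2 * ((1/2:ℝ)^(n+1)) = (1/2:ℝ)^n := by ring
    rw [h2t] at hcv
    simp only [hφ]
    linarith
  have hgeom : ∀ n, φ n - g x ≤ (1/2:ℝ)^n * (φ 0 - g x) := by
    intro n
    induction n with
    | zero => simp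
    | succ n ih =>
        have := hrec n
        have h2 : (1/2:ℝ)^(n+1) * (φ 0 - g x) = ((1/2:ℝ)^n * (φ 0 - g x))/2 := by ring
        rw [h2]
        linarith
  have hup : ∀ n, φ n ≤ g x + (1/2:ℝ)^n * (φ 0 - g x) := by
    intro n; linarith [hgeom n]
  have htend : Filter.Tendsto (fun n : ℕ => g x + (1/2:ℝ)^n * (φ 0 - g x)) Filter.atTop
      (nhds (g x)) := by
    have h0 : Filter.Tendsto (fun n : ℕ => (1/2:ℝ)^n) Filter.atTop (nhds 0) :=
      tendsto_pow_atTop_nhds_zero_of_lt_one (by norm_num) (by norm_num)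
    have := (h0.mul_const (φ 0 - g x)).const_add (g x)
    simpa using this
  exact tendsto_of_tendsto_of_tendsto_of_le_of_le tendsto_const_nhds htend hlow hup

end WithG

noncomputable def csq (g : (Fin m → ℝ) → ℝ) (p : Fin m → ℕ) (n : ℕ) : ℝ :=
  iterFinDiff (diffList p ((1/2:ℝ)^n)) g 0 /
    (((1/2:ℝ)^n) ^ (∑ i, p i) * ∏ i, (Nat.factorial (p i) : ℝ))

noncomputable def Acoef (g : (Fin m → ℝ) → ℝ) (p : Fin m → ℕ) : ℝ := ⨅ n, csq g p n

section WithG2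
variable {g : (Fin m → ℝ) → ℝ}
variable (hdiff : ∀ l : List (Fin m × ℝ), (∀ q ∈ l, 0 < q.2) →
      ∀ x : Fin m → ℝ, (∀ i, 0 ≤ x i) → 0 ≤ iterFinDiff l g x)

include hdiff

lemma csq_nonneg (p : Fin m → ℕ) (n : ℕ) : 0 ≤ csq g p n :=
  div_nonneg (Dp_nonneg hdiff p (hstep_pos n) (by intro i; simp)) (cs_well p n).le

lemma csq_antitone (p : Fin m → ℕ) : Antitone (csq g p) :=
  antitone_nat_of_succ_le (fun n => cs_antitone_step hdiff p n)

lemma Acoef_nonneg (p : Fin m → ℕ) : 0 ≤ Acoef g p :=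
  le_ciInf (fun n => csq_nonneg hdiff p n)

lemma Acoef_le_csq (p : Fin m → ℕ) (n : ℕ) : Acoef g p ≤ csq g p n :=
  ciInf_le ⟨0, by rintro y ⟨k, rfl⟩; exact csq_nonneg hdiff p k⟩ n

lemma csq_tendsto (p : Fin m → ℕ) :
    Filter.Tendsto (csq g p) Filter.atTop (nhds (Acoef g p)) :=
  tendsto_atTop_ciInf (csq_antitone hdiff p)
    ⟨0, by rintro y ⟨k, rfl⟩; exact csq_nonneg hdiff p k⟩

omit hdiff in
lemma Dp_eq_csq (p : Fin m → ℕ) (n : ℕ) :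
    iterFinDiff (diffList p ((1/2:ℝ)^n)) g 0 =
      csq g p n * (((1/2:ℝ)^n) ^ (∑ i, p i) * ∏ i, (Nat.factorial (p i) : ℝ)) := by
  rw [csq, div_mul_cancel₀]
  exact (cs_well p n).ne'

lemma term_lower (p q : Fin m → ℕ) (n : ℕ) (x : Fin m → ℝ) (hpq : ∀ i, p i ≤ q i)
    (hxq : ∀ i, x i ≤ (q i : ℝ) * (1/2:ℝ)^n)
    (hxp : ∀ i, 0 ≤ x i - (p i : ℝ) * (1/2:ℝ)^n) :
    csq g p n * ∏ i, (x i - (p i : ℝ) * (1/2:ℝ)^n) ^ (p i) ≤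
      ((∏ i, (q i).choose (p i) : ℕ) : ℝ) * iterFinDiff (diffList p ((1/2:ℝ)^n)) g 0 := by
  set h : ℝ := (1/2:ℝ)^n with hhdef
  have hh : 0 < h := hstep_pos n
  have key : ∏ i, (x i - (p i : ℝ) * h) ^ (p i) ≤
      ((∏ i, (q i).choose (p i) : ℕ) : ℝ) * ((h ^ (∑ i, p i)) * ∏ i, (Nat.factorial (p i) : ℝ)) := by
    have step : ∀ i ∈ Finset.univ, (x i - (p i : ℝ) * h) ^ (p i) ≤
        (((q i).choose (p i) * Nat.factorial (p i) : ℕ) : ℝ) * h ^ (p i) := by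
      intro i _
      have h1 : x i - (p i : ℝ) * h ≤ ((q i - p i : ℕ) : ℝ) * h := by
        rw [Nat.cast_sub (hpq i)]
        have := hxq i
        nlinarith
      have h2 : (x i - (p i : ℝ) * h) ^ (p i) ≤ (((q i - p i : ℕ) : ℝ) * h) ^ (p i) :=
        pow_le_pow_left₀ (hxp i) h1 (p i)
      refine h2.trans ?_
      rw [mul_pow]
      have h3 : (((q i - p i : ℕ) : ℝ)) ^ (p i) ≤ (((q i).choose (p i) * Nat.factorial (p i) : ℕ) : ℝ) := by
        exact_mod_cast pow_sub_le_choose_mul_factorial (q i) (p i)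
      have h4 : (0:ℝ) ≤ h ^ (p i) := by positivity
      calc (((q i - p i : ℕ) : ℝ)) ^ (p i) * h ^ (p i)
          = ((q i - p i : ℕ) : ℝ) ^ (p i) * h ^ (p i) := by norm_cast
        _ ≤ (((q i).choose (p i) * Nat.factorial (p i) : ℕ) : ℝ) * h ^ (p i) := by
            exact mul_le_mul_of_nonneg_right h3 h4
    have hprod := Finset.prod_le_prod (fun i _ => pow_nonneg (hxp i) (p i)) step
    refine hprod.trans (le_of_eq ?_)
    rw [Finset.prod_mul_distrib, Finset.prod_pow_eq_pow_sum]
    push_cast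
    rw [Finset.prod_mul_distrib]
    ring
  have hcs := csq_nonneg hdiff p n
  calc csq g p n * ∏ i, (x i - (p i : ℝ) * h) ^ (p i)
      ≤ csq g p n * (((∏ i, (q i).choose (p i) : ℕ) : ℝ) *
          ((h ^ (∑ i, p i)) * ∏ i, (Nat.factorial (p i) : ℝ))) :=
        mul_le_mul_of_nonneg_left key hcs
    _ = ((∏ i, (q i).choose (p i) : ℕ) : ℝ) * iterFinDiff (diffList p h) g 0 := by
        rw [Dp_eq_csq]
        ring

omit hdiff in
lemma term_upper (p q : Fin m → ℕ) (n : ℕ)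
    (hDp : 0 ≤ iterFinDiff (diffList p ((1/2:ℝ)^n)) g 0)
    (hcs : 0 ≤ csq g p n) :
    ((∏ i, (q i).choose (p i) : ℕ) : ℝ) * iterFinDiff (diffList p ((1/2:ℝ)^n)) g 0 ≤
      csq g p n * ∏ i, ((q i : ℝ) * (1/2:ℝ)^n) ^ (p i) := by
  set h : ℝ := (1/2:ℝ)^n with hhdef
  have hh : 0 < h := hstep_pos n
  have key : ((∏ i, (q i).choose (p i) : ℕ) : ℝ) *
      ((h ^ (∑ i, p i)) * ∏ i, (Nat.factorial (p i) : ℝ)) ≤ ∏ i, ((q i : ℝ) * h) ^ (p i) := by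
    have step : ∀ i ∈ Finset.univ,
        (((q i).choose (p i) * Nat.factorial (p i) : ℕ) : ℝ) * h ^ (p i) ≤ ((q i : ℝ) * h) ^ (p i) := by
      intro i _
      rw [mul_pow]
      have h3 : (((q i).choose (p i) * Nat.factorial (p i) : ℕ) : ℝ) ≤ ((q i : ℝ)) ^ (p i) := by
        exact_mod_cast choose_mul_factorial_le_pow (q i) (p i)
      have h4 : (0:ℝ) ≤ h ^ (p i) := by positivity
      exact mul_le_mul_of_nonneg_right h3 h4
    have hprod := Finset.prod_le_prod (fun i _ => by positivity) step
    refine le_trans (le_of_eq ?_) hprod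
    rw [Finset.prod_mul_distrib, Finset.prod_pow_eq_pow_sum]
    push_cast
    rw [Finset.prod_mul_distrib]
    ring
  rw [Dp_eq_csq]
  have heq : ((∏ i, (q i).choose (p i) : ℕ) : ℝ) *
      (csq g p n * (((1/2:ℝ)^n) ^ (∑ i, p i) * ∏ i, (Nat.factorial (p i) : ℝ))) =
      csq g p n * (((∏ i, (q i).choose (p i) : ℕ) : ℝ) *
        ((h ^ (∑ i, p i)) * ∏ i, (Nat.factorial (p i) : ℝ))) := by
    ring
  rw [heq]
  exact mul_le_mul_of_nonneg_left key hcs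

end WithG2

section Main
variable {g : (Fin m → ℝ) → ℝ}
variable (hdiff : ∀ l : List (Fin m × ℝ), (∀ q ∈ l, 0 < q.2) →
      ∀ x : Fin m → ℝ, (∀ i, 0 ≤ x i) → 0 ≤ iterFinDiff l g x)

include hdiff

lemma sum_A_le (x : Fin m → ℝ) (hx : ∀ i, 0 ≤ x i) (S : Finset (Fin m → ℕ)) :
    ∑ p ∈ S, Acoef g p * ∏ i, x i ^ p i ≤ g x := by
  classical
  -- restrict to "good" multi-indices
  have hred : ∑ p ∈ S.filter (fun p => ∀ i, x i = 0 → p i = 0), Acoef g p * ∏ i, x i ^ p i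
      = ∑ p ∈ S, Acoef g p * ∏ i, x i ^ p i := by
    refine Finset.sum_filter_of_ne ?_
    intro p hp hne i hxi
    by_contra hpi
    refine hne ?_
    have : x i ^ p i = 0 := by
      rw [hxi]; exact zero_pow hpi
    rw [Finset.prod_eq_zero (Finset.mem_univ i) this, mul_zero]
  rw [← hred]
  set T := S.filter (fun p => ∀ i, x i = 0 → p i = 0) with hT
  have hTgood : ∀ p ∈ T, ∀ i, x i = 0 → p i = 0 := by
    intro p hp
    exact (Finset.mem_filter.mp hp).2
  set B : ℕ := T.sup (fun p => Finset.univ.sup p) with hB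
  have hBle : ∀ p ∈ T, ∀ i, p i ≤ B :=
    fun p hp i => le_trans (Finset.le_sup (Finset.mem_univ i)) (Finset.le_sup hp)
  -- eventually the grid is fine enough
  have hEv : ∀ᶠ n : ℕ in Filter.atTop, ∀ i, 0 < x i → ((B:ℝ)+1) * (1/2)^n ≤ x i := by
    rw [Filter.eventually_all]
    intro i
    by_cases hxi : 0 < x i
    · have htends : Filter.Tendsto (fun n : ℕ => ((B:ℝ)+1)*(1/2)^n) Filter.atTop (nhds 0) := by
        simpa using (tendsto_pow_atTop_nhds_zero_of_lt_one (by norm_num) (by norm_num :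
          (1/2:ℝ) < 1)).const_mul ((B:ℝ)+1)
      exact (htends.eventually_lt_const hxi).mono (fun n hn _ => hn.le)
    · exact Filter.Eventually.of_forall (fun n h => absurd h hxi)
  -- limit of partial lower sums
  have hL : Filter.Tendsto
      (fun n : ℕ => ∑ p ∈ T, csq g p n * ∏ i, (x i - (p i : ℝ) * (1/2)^n) ^ (p i))
      Filter.atTop (nhds (∑ p ∈ T, Acoef g p * ∏ i, x i ^ p i)) := by
    refine tendsto_finset_sum _ (fun p _ => ?_)
    refine (csq_tendsto hdiff p).mul (tendsto_finset_prod _ (fun i _ => ?_))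
    have hbase : Filter.Tendsto (fun n : ℕ => x i - (p i : ℝ) * (1/2)^n) Filter.atTop
        (nhds (x i)) := by
      have := (tendsto_pow_atTop_nhds_zero_of_lt_one (by norm_num) (by norm_num :
        (1/2:ℝ) < 1)).const_mul ((p i : ℝ))
      simpa using tendsto_const_nhds.sub this
    exact hbase.pow (p i)
  refine le_of_tendsto_of_tendsto hL (diag_rc hdiff hx) ?_
  filter_upwards [hEv] with n hE
  -- fixed n chain
  set h : ℝ := (1/2:ℝ)^n with hhd
  have hh : 0 < h := hstep_pos n
  set q : Fin m → ℕ := fun i => ⌈x i / h⌉₊ with hqd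
  have hq1 : ∀ i, x i ≤ (q i : ℝ) * h := by
    intro i
    have := Nat.le_ceil (x i / h)
    rw [div_le_iff₀ hh] at this
    exact this
  have hq2 : ∀ i, (q i : ℝ) * h ≤ x i + h := by
    intro i
    have hlt := Nat.ceil_lt_add_one (div_nonneg (hx i) hh.le)
    have : (q i : ℝ) * h < (x i / h + 1) * h := by
      exact mul_lt_mul_of_pos_right hlt hh
    rw [add_mul, one_mul, div_mul_cancel₀ _ hh.ne'] at this
    exact this.le
  have hpq : ∀ p ∈ T, ∀ i, p i ≤ q i := by
    intro p hp i
    rcases eq_or_lt_of_le (hx i) with hxi | hxi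
    · rw [hTgood p hp i hxi.symm]
      exact Nat.zero_le _
    · have h1 : ((B:ℝ)+1) * h ≤ x i := hE i hxi
      have h2 : ((p i : ℝ) + 1) * h ≤ x i := by
        have : (p i : ℝ) ≤ (B : ℝ) := by exact_mod_cast hBle p hp i
        nlinarith
      have h3 : (p i : ℝ) + 1 ≤ x i / h := by
        rw [le_div_iff₀ hh]
        exact h2
      have h4 : (p i : ℝ) + 1 ≤ (q i : ℝ) := le_trans h3 (Nat.le_ceil _)
      have h5 : p i + 1 ≤ q i := by exact_mod_cast h4
      omega
  have hxp : ∀ p ∈ T, ∀ i, 0 ≤ x i - (p i : ℝ) * h := by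
    intro p hp i
    rcases eq_or_lt_of_le (hx i) with hxi | hxi
    · rw [hTgood p hp i hxi.symm]
      simp [hx i]
    · have h1 := hE i hxi
      have h2 : (p i : ℝ) ≤ (B : ℝ) := by exact_mod_cast hBle p hp i
      nlinarith
  calc ∑ p ∈ T, csq g p n * ∏ i, (x i - (p i : ℝ) * h) ^ (p i)
      ≤ ∑ p ∈ T, ((∏ i, (q i).choose (p i) : ℕ) : ℝ) * iterFinDiff (diffList p h) g 0 := by
        refine Finset.sum_le_sum (fun p hp => ?_)
        exact term_lower hdiff p q n x (hpq p hp) hq1 (hxp p hp)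
    _ ≤ ∑ p ∈ Finset.Iic q, ((∏ i, (q i).choose (p i) : ℕ) : ℝ) *
          iterFinDiff (diffList p h) g 0 := by
        refine Finset.sum_le_sum_of_subset_of_nonneg ?_ ?_
        · intro p hp
          simp only [Finset.mem_Iic, Pi.le_def]
          exact hpq p hp
        · intro p _ _
          refine mul_nonneg (by positivity) (Dp_nonneg hdiff p hh ?_)
          intro i
          exact le_refl 0
    _ = g (fun j => (q j : ℝ) * h) := by
        have hnew := newton h (∑ i, q i) q (le_refl _) g 0
        rw [zero_add] at hnew
        exact hnew.symm
    _ ≤ g (x + h • (fun _ => (1:ℝ))) := by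
        refine g_mono hdiff (fun i => by positivity) ?_
        intro i
        simp only [Pi.add_apply, Pi.smul_apply, smul_eq_mul, mul_one]
        exact hq2 i


lemma g_le_partial (x : Fin m → ℝ) (hx : ∀ i, 0 ≤ x i) (K : ℕ) :
    g x ≤ (∑ p ∈ (Finset.Iic (fun _ => K : Fin m → ℕ)).filter (fun p => ∑ i, p i ≤ K),
          Acoef g p * ∏ i, x i ^ p i)
        + (1/2:ℝ)^(K+1) * g (fun i => 2 * x i + 3) := by
  classical
  set SK := (Finset.Iic (fun _ => K : Fin m → ℕ)).filter (fun p => ∑ i, p i ≤ K) with hSK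
  set w : Fin m → ℝ := fun i => 2 * x i + 3 with hw
  -- limit of the upper sums
  have hL : Filter.Tendsto
      (fun n : ℕ => (∑ p ∈ SK, csq g p n * ∏ i, (x i + (1/2:ℝ)^n) ^ (p i))
        + (1/2:ℝ)^(K+1) * g w)
      Filter.atTop
      (nhds ((∑ p ∈ SK, Acoef g p * ∏ i, x i ^ p i) + (1/2:ℝ)^(K+1) * g w)) := by
    refine Filter.Tendsto.add_const _ ?_
    refine tendsto_finset_sum _ (fun p _ => ?_)
    refine (csq_tendsto hdiff p).mul (tendsto_finset_prod _ (fun i _ => ?_))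
    have hbase : Filter.Tendsto (fun n : ℕ => x i + (1/2:ℝ)^n) Filter.atTop (nhds (x i)) := by
      simpa using tendsto_const_nhds.add (tendsto_pow_atTop_nhds_zero_of_lt_one
        (by norm_num) (by norm_num : (1/2:ℝ) < 1))
    exact hbase.pow (p i)
  refine ge_of_tendsto' hL ?_
  intro n
  -- fixed n chain
  set h : ℝ := (1/2:ℝ)^n with hhd
  have hh : 0 < h := hstep_pos n
  have hh1 : h ≤ 1 := by
    rw [hhd]
    exact pow_le_one₀ (by norm_num) (by norm_num)
  set q : Fin m → ℕ := fun i => ⌈x i / h⌉₊ with hqd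
  have hq1 : ∀ i, x i ≤ (q i : ℝ) * h := by
    intro i
    have := Nat.le_ceil (x i / h)
    rw [div_le_iff₀ hh] at this
    exact this
  have hq2 : ∀ i, (q i : ℝ) * h ≤ x i + h := by
    intro i
    have hlt := Nat.ceil_lt_add_one (div_nonneg (hx i) hh.le)
    have h2 : (q i : ℝ) * h < (x i / h + 1) * h := mul_lt_mul_of_pos_right hlt hh
    rw [add_mul, one_mul, div_mul_cancel₀ _ hh.ne'] at h2
    exact h2.le
  set Q : Fin m → ℕ := fun i => 2 * q i + 2^n with hQd
  have h2q : ∀ i, 2 * q i ≤ Q i := by intro i; simp only [hQd]; exact Nat.le_add_right _ _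
  have hqQ : ∀ i, q i ≤ Q i := by
    intro i
    simp only [hQd]
    exact le_trans (by omega) (Nat.le_add_right (2 * q i) (2^n))
  have hpow1 : ((2:ℝ))^n * h = 1 := by
    rw [hhd, ← mul_pow]
    norm_num
  have hQe : ∀ i, (Q i : ℝ) * h = 2 * ((q i : ℝ) * h) + 1 := by
    intro i
    rw [hQd]
    push_cast
    rw [add_mul]
    rw [hpow1]
    ring
  have hQw : ∀ i, (Q i : ℝ) * h ≤ w i := by
    intro i
    rw [hQe i, hw]
    have := hq2 i
    simp only
    linarith
  -- start of chain
  have step1 : g x ≤ g (fun j => (q j : ℝ) * h) := g_mono hdiff hx hq1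
  have hnewq : g (fun j => (q j : ℝ) * h) =
      ∑ p ∈ Finset.Iic q, ((∏ i, (q i).choose (p i) : ℕ) : ℝ) * iterFinDiff (diffList p h) g 0 := by
    have hnew := newton h (∑ i, q i) q (le_refl _) g 0
    rw [zero_add] at hnew
    exact hnew
  have hsplit : ∑ p ∈ Finset.Iic q, ((∏ i, (q i).choose (p i) : ℕ) : ℝ) *
        iterFinDiff (diffList p h) g 0 =
      (∑ p ∈ (Finset.Iic q).filter (fun p => ∑ i, p i ≤ K),
        ((∏ i, (q i).choose (p i) : ℕ) : ℝ) * iterFinDiff (diffList p h) g 0)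
      + ∑ p ∈ (Finset.Iic q).filter (fun p => ¬ (∑ i, p i ≤ K)),
        ((∏ i, (q i).choose (p i) : ℕ) : ℝ) * iterFinDiff (diffList p h) g 0 :=
    (Finset.sum_filter_add_sum_filter_not _ _ _).symm
  -- main part
  have hmain : ∑ p ∈ (Finset.Iic q).filter (fun p => ∑ i, p i ≤ K),
      ((∏ i, (q i).choose (p i) : ℕ) : ℝ) * iterFinDiff (diffList p h) g 0 ≤
      ∑ p ∈ SK, csq g p n * ∏ i, (x i + h) ^ (p i) := by
    have hterm : ∀ p, ((∏ i, (q i).choose (p i) : ℕ) : ℝ) * iterFinDiff (diffList p h) g 0 ≤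
        csq g p n * ∏ i, (x i + h) ^ (p i) := by
      intro p
      refine le_trans (term_upper p q n
        (Dp_nonneg hdiff p hh (fun i => le_refl 0)) (csq_nonneg hdiff p n)) ?_
      refine mul_le_mul_of_nonneg_left ?_ (csq_nonneg hdiff p n)
      refine Finset.prod_le_prod (fun i _ => by positivity) (fun i _ => ?_)
      exact pow_le_pow_left₀ (by positivity) (hq2 i) (p i)
    calc ∑ p ∈ (Finset.Iic q).filter (fun p => ∑ i, p i ≤ K),
          ((∏ i, (q i).choose (p i) : ℕ) : ℝ) * iterFinDiff (diffList p h) g 0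
        ≤ ∑ p ∈ (Finset.Iic q).filter (fun p => ∑ i, p i ≤ K),
            csq g p n * ∏ i, (x i + h) ^ (p i) :=
          Finset.sum_le_sum (fun p _ => hterm p)
      _ ≤ ∑ p ∈ SK, csq g p n * ∏ i, (x i + h) ^ (p i) := by
          refine Finset.sum_le_sum_of_subset_of_nonneg ?_ ?_
          · intro p hp
            obtain ⟨hp1, hp2⟩ := Finset.mem_filter.mp hp
            rw [hSK, Finset.mem_filter]
            refine ⟨?_, hp2⟩
            rw [Finset.mem_Iic, Pi.le_def]
            intro i
            exact le_trans (Finset.single_le_sum (fun j _ => Nat.zero_le (p j))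
              (Finset.mem_univ i)) hp2
          · intro p _ _
            refine mul_nonneg (csq_nonneg hdiff p n) ?_
            refine Finset.prod_nonneg (fun i _ => ?_)
            exact pow_nonneg (by linarith [hx i, hh.le] : (0:ℝ) ≤ x i + h) _
  -- tail part
  have htail : ∑ p ∈ (Finset.Iic q).filter (fun p => ¬ (∑ i, p i ≤ K)),
      ((∏ i, (q i).choose (p i) : ℕ) : ℝ) * iterFinDiff (diffList p h) g 0 ≤
      (1/2:ℝ)^(K+1) * g w := by
    have hterm : ∀ p, (K + 1 ≤ ∑ i, p i) →
        ((∏ i, (q i).choose (p i) : ℕ) : ℝ) * iterFinDiff (diffList p h) g 0 ≤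
        (1/2:ℝ)^(K+1) * (((∏ i, (Q i).choose (p i) : ℕ) : ℝ) * iterFinDiff (diffList p h) g 0) := by
      intro p hK1
      have hnat : 2 ^ (∑ i, p i) * ∏ i, (q i).choose (p i) ≤ ∏ i, (Q i).choose (p i) := by
        have hprod : ∏ i, (2 ^ (p i) * (q i).choose (p i)) ≤ ∏ i, (Q i).choose (p i) :=
          Finset.prod_le_prod' (fun i _ => choose_doubling (h2q i) (p i))
        rw [Finset.prod_mul_distrib, Finset.prod_pow_eq_pow_sum] at hprod
        exact hprod
      have hreal : ((∏ i, (q i).choose (p i) : ℕ) : ℝ) ≤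
          (1/2:ℝ)^(∑ i, p i) * ((∏ i, (Q i).choose (p i) : ℕ) : ℝ) := by
        have hcast : (2:ℝ) ^ (∑ i, p i) * ((∏ i, (q i).choose (p i) : ℕ) : ℝ) ≤
            ((∏ i, (Q i).choose (p i) : ℕ) : ℝ) := by
          exact_mod_cast hnat
        have h2pos : (0:ℝ) < 2 ^ (∑ i, p i) := by positivity
        rw [one_div, inv_pow, ← div_eq_inv_mul, le_div_iff₀ h2pos]
        linarith [hcast]
      have hDp : 0 ≤ iterFinDiff (diffList p h) g 0 := Dp_nonneg hdiff p hh (fun i => le_refl 0)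
      have hWQ : (0:ℝ) ≤ ((∏ i, (Q i).choose (p i) : ℕ) : ℝ) := by positivity
      have hhalf : (1/2:ℝ)^(∑ i, p i) ≤ (1/2:ℝ)^(K+1) :=
        pow_le_pow_of_le_one (by norm_num) (by norm_num) hK1
      calc ((∏ i, (q i).choose (p i) : ℕ) : ℝ) * iterFinDiff (diffList p h) g 0
          ≤ ((1/2:ℝ)^(∑ i, p i) * ((∏ i, (Q i).choose (p i) : ℕ) : ℝ)) *
              iterFinDiff (diffList p h) g 0 := mul_le_mul_of_nonneg_right hreal hDp
        _ ≤ ((1/2:ℝ)^(K+1) * ((∏ i, (Q i).choose (p i) : ℕ) : ℝ)) *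
              iterFinDiff (diffList p h) g 0 :=
            mul_le_mul_of_nonneg_right (mul_le_mul_of_nonneg_right hhalf hWQ) hDp
        _ = (1/2:ℝ)^(K+1) * (((∏ i, (Q i).choose (p i) : ℕ) : ℝ) *
              iterFinDiff (diffList p h) g 0) := by ring
    have hnewQ : g (fun j => (Q j : ℝ) * h) =
        ∑ p ∈ Finset.Iic Q, ((∏ i, (Q i).choose (p i) : ℕ) : ℝ) *
          iterFinDiff (diffList p h) g 0 := by
      have hnew := newton h (∑ i, Q i) Q (le_refl _) g 0
      rw [zero_add] at hnew
      exact hnew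
    calc ∑ p ∈ (Finset.Iic q).filter (fun p => ¬ (∑ i, p i ≤ K)),
          ((∏ i, (q i).choose (p i) : ℕ) : ℝ) * iterFinDiff (diffList p h) g 0
        ≤ ∑ p ∈ (Finset.Iic q).filter (fun p => ¬ (∑ i, p i ≤ K)),
            (1/2:ℝ)^(K+1) * (((∏ i, (Q i).choose (p i) : ℕ) : ℝ) *
              iterFinDiff (diffList p h) g 0) := by
          refine Finset.sum_le_sum (fun p hp => ?_)
          have hK1 : K + 1 ≤ ∑ i, p i := by
            have := (Finset.mem_filter.mp hp).2
            omega
          exact hterm p hK1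
      _ = (1/2:ℝ)^(K+1) * ∑ p ∈ (Finset.Iic q).filter (fun p => ¬ (∑ i, p i ≤ K)),
            ((∏ i, (Q i).choose (p i) : ℕ) : ℝ) * iterFinDiff (diffList p h) g 0 := by
          rw [Finset.mul_sum]
      _ ≤ (1/2:ℝ)^(K+1) * ∑ p ∈ Finset.Iic Q,
            ((∏ i, (Q i).choose (p i) : ℕ) : ℝ) * iterFinDiff (diffList p h) g 0 := by
          refine mul_le_mul_of_nonneg_left ?_ (by positivity)
          refine Finset.sum_le_sum_of_subset_of_nonneg ?_ ?_
          · intro p hp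
            have hp1 := (Finset.mem_filter.mp hp).1
            rw [Finset.mem_Iic, Pi.le_def] at hp1 ⊢
            intro i
            exact le_trans (hp1 i) (hqQ i)
          · intro p _ _
            exact mul_nonneg (by positivity) (Dp_nonneg hdiff p hh (fun i => le_refl 0))
      _ = (1/2:ℝ)^(K+1) * g (fun j => (Q j : ℝ) * h) := by rw [← hnewQ]
      _ ≤ (1/2:ℝ)^(K+1) * g w := by
          refine mul_le_mul_of_nonneg_left ?_ (by positivity)
          exact g_mono hdiff (fun i => by positivity) hQw
  calc g x ≤ g (fun j => (q j : ℝ) * h) := step1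
    _ = _ := hnewq
    _ = _ := hsplit
    _ ≤ (∑ p ∈ SK, csq g p n * ∏ i, (x i + h) ^ (p i)) + (1/2:ℝ)^(K+1) * g w :=
        add_le_add hmain htail

end Main
end AM

theorem stmt9 (m : ℕ) (g : (Fin m → ℝ) → ℝ)
    (hnn : ∀ x : Fin m → ℝ, (∀ i, 0 ≤ x i) → 0 ≤ g x)
    (hdiff : ∀ l : List (Fin m × ℝ), (∀ q ∈ l, 0 < q.2) →
      ∀ x : Fin m → ℝ, (∀ i, 0 ≤ x i) → 0 ≤ iterFinDiff l g x) :
    ∃ a : (Fin m → ℕ) → ℝ, (∀ p, 0 ≤ a p) ∧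
      ∀ x : Fin m → ℝ, (∀ i, 0 ≤ x i) →
        HasSum (fun p : Fin m → ℕ => a p * ∏ i, x i ^ p i) (g x) := by
  refine ⟨AM.Acoef g, fun p => AM.Acoef_nonneg hdiff p, ?_⟩
  intro x hx
  have hf0 : ∀ p : Fin m → ℕ, 0 ≤ AM.Acoef g p * ∏ i, x i ^ p i := fun p =>
    mul_nonneg (AM.Acoef_nonneg hdiff p)
      (Finset.prod_nonneg fun i _ => pow_nonneg (hx i) _)
  have hsum : Summable (fun p : Fin m → ℕ => AM.Acoef g p * ∏ i, x i ^ p i) :=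
    summable_of_sum_le (fun p => hf0 p) (fun u => AM.sum_A_le hdiff x hx u)
  have h1 : (∑' p : Fin m → ℕ, AM.Acoef g p * ∏ i, x i ^ p i) ≤ g x :=
    Summable.tsum_le_of_sum_le hsum (fun u => AM.sum_A_le hdiff x hx u)
  have h2 : g x ≤ ∑' p : Fin m → ℕ, AM.Acoef g p * ∏ i, x i ^ p i := by
    have hK : ∀ K : ℕ, g x ≤ (∑' p : Fin m → ℕ, AM.Acoef g p * ∏ i, x i ^ p i)
        + (1/2:ℝ)^(K+1) * g (fun i => 2 * x i + 3) := by
      intro K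
      refine (AM.g_le_partial hdiff x hx K).trans (add_le_add ?_ le_rfl)
      exact Summable.sum_le_tsum _ (fun p _ => hf0 p) hsum
    have hpow : Filter.Tendsto (fun K : ℕ => (1/2:ℝ)^(K+1)) Filter.atTop (nhds 0) := by
      have := tendsto_pow_atTop_nhds_zero_of_lt_one (by norm_num) (by norm_num : (1/2:ℝ) < 1)
      simpa [pow_succ] using this.mul_const (1/2:ℝ)
    have htendK : Filter.Tendsto
        (fun K : ℕ => (∑' p : Fin m → ℕ, AM.Acoef g p * ∏ i, x i ^ p i)
          + (1/2:ℝ)^(K+1) * g (fun i => 2 * x i + 3))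
        Filter.atTop
        (nhds ((∑' p : Fin m → ℕ, AM.Acoef g p * ∏ i, x i ^ p i) + 0)) := by
      simpa using tendsto_const_nhds.add (hpow.mul_const (g (fun i => 2 * x i + 3)))
    have := ge_of_tendsto' htendK hK
    simpa using this
  have heq : (∑' p : Fin m → ℕ, AM.Acoef g p * ∏ i, x i ^ p i) = g x := le_antisymm h1 h2
  exact heq ▸ hsum.hasSum
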